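/- If N is a binary normal network on X with k reticulations, then the display set of N (the set of binary phylogenetic X-trees displayed by N) has exactly 2^k elements. -/

import Mathlib

structure Net (X : Type) where
  V : Type
  fintypeV : Fintype V
  E : V → V → Prop
  root : V
  leaf : X → V
  leaf_inj : Function.Injective leaf
  acyclic : ∀ v : V, ¬ Relation.TransGen E v v
  no_in_root : ∀ u : V, ¬ E u root
  connected : ∀ v : V, Relation.ReflTransGen E root v

namespace Net

variable {X : Type} (N : Net X)

noncomputable instance : Fintype N.V := N.fintypeV

/-- The in-degree of a vertex. -/
noncomputable def indeg (v : N.V) : ℕ := {u : N.V | N.E u v}.ncard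

/-- The out-degree of a vertex. -/
noncomputable def outdeg (v : N.V) : ℕ := {u : N.V | N.E v u}.ncard

/-- A vertex is a leaf if it is labelled by an element of `X`. -/
def IsLeaf (v : N.V) : Prop := ∃ x : X, N.leaf x = v

/-- `N` is a (rooted) phylogenetic network on `X`: the root has out-degree two, the
leaves are exactly the out-degree-zero vertices and have in-degree one, and every
other vertex is a tree vertex (in-degree one, out-degree two) or a reticulation
(in-degree at least two, out-degree one). -/
def ValidNet : Prop :=
  N.outdeg N.root = 2 ∧
  (∀ x : X, N.indeg (N.leaf x) = 1 ∧ N.outdeg (N.leaf x) = 0) ∧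
  (∀ v : N.V, N.outdeg v = 0 → N.IsLeaf v) ∧
  (∀ v : N.V, v ≠ N.root → ¬ N.IsLeaf v →
    (N.indeg v = 1 ∧ N.outdeg v = 2) ∨ (2 ≤ N.indeg v ∧ N.outdeg v = 1))

/-- A reticulation is a vertex of in-degree at least two. -/
def IsReticulation (v : N.V) : Prop := 2 ≤ N.indeg v

/-- `N` is binary if every reticulation has in-degree exactly two. -/
def Binary : Prop := ∀ v : N.V, N.IsReticulation v → N.indeg v = 2

/-- `N` is tree-child: every non-leaf vertex has a child of in-degree at most one
(i.e. a child that is a tree vertex or a leaf). -/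
def TreeChild : Prop := ∀ v : N.V, ¬ N.IsLeaf v → ∃ c : N.V, N.E v c ∧ N.indeg c ≤ 1

/-- The reticulation edge `(u,v)` is a shortcut: there is a directed path from `u`
to `v` avoiding the edge `(u,v)`. -/
def Shortcut (u v : N.V) : Prop :=
  N.E u v ∧ 2 ≤ N.indeg v ∧ ∃ p : N.V, p ≠ u ∧ N.E p v ∧ Relation.ReflTransGen N.E u p

def HasNoShortcut : Prop := ∀ u v : N.V, ¬ N.Shortcut u v

/-- `N` is a normal network: a tree-child phylogenetic network with no shortcut. -/
def Normal : Prop := N.ValidNet ∧ N.TreeChild ∧ N.HasNoShortcut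

/-- `N` is a (rooted) binary phylogenetic `X`-tree: a phylogenetic network with
no reticulations. -/
def IsBinTree : Prop := N.ValidNet ∧ ∀ v : N.V, N.indeg v ≤ 1

/-- There is a tree path from `v` to the leaf labelled `x`: a directed path all of
whose vertices except possibly `v` are tree vertices or leaves. -/
def TreePathTo (v : N.V) (x : X) : Prop :=
  Relation.ReflTransGen (fun a b => N.E a b ∧ N.indeg b ≤ 1) v (N.leaf x)

/-- The hybridisation number `h(N) = ∑_{v ≠ root} (indeg v − 1)`. -/
noncomputable def hyb : ℕ := ∑ v : N.V, (N.indeg v - 1)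

/-- The number of reticulations of `N`. -/
noncomputable def numRetic : ℕ := {v : N.V | N.IsReticulation v}.ncard

/-- The number of shortcuts of `N`. -/
noncomputable def numShortcuts : ℕ := {q : N.V × N.V | N.Shortcut q.1 q.2}.ncard

/-- The length of the shortcut `(u,v)`: the number of vertices in the union of the
vertex sets of all directed paths from `u` to a parent of `v`. -/
noncomputable def scLen (u v : N.V) : ℕ :=
  {w : N.V | ∃ p : N.V, N.E p v ∧ Relation.ReflTransGen N.E u w ∧
    Relation.ReflTransGen N.E w p}.ncard

/-- `{a, b}` is a cherry: the leaves labelled `a` and `b` have a common parent. -/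
def Cherry (a b : X) : Prop :=
  a ≠ b ∧ ∃ p : N.V, N.E p (N.leaf a) ∧ N.E p (N.leaf b)

/-- `{a, b}` is a reticulated cherry with reticulation leaf `a`: the parent of `a`
is a reticulation and the parent of `b` is one of its parents. -/
def RetCherry (a b : X) : Prop :=
  a ≠ b ∧ ∃ pa pb : N.V, N.E pa (N.leaf a) ∧ N.E pb (N.leaf b) ∧
    N.IsReticulation pa ∧ N.E pb pa

/-- The cluster of a vertex: the set of leaf labels reachable from it. -/
def cluster (v : N.V) : Set X := {x : X | Relation.ReflTransGen N.E v (N.leaf x)}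

/-- Isomorphism of phylogenetic networks on `X`. -/
def Iso (M : Net X) : Prop :=
  ∃ e : N.V ≃ M.V, (∀ u v : N.V, N.E u v ↔ M.E (e u) (e v)) ∧
    ∀ x : X, e (N.leaf x) = M.leaf x

end Net

/-- An embedding of the tree `T` in the network `N`: an injective map on vertices
(respecting leaf labels) together with, for each edge of `T`, a directed path in `N`
between the images, such that internal vertices of these paths avoid the image of
the map and paths of distinct edges are internally disjoint. -/
structure Emb {X : Type} (N T : Net X) where
  φ : T.V → N.V
  inj : Function.Injective φ
  leafmap : ∀ x : X, φ (T.leaf x) = N.leaf x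
  paths : T.V → T.V → List N.V
  chain : ∀ u v : T.V, T.E u v → List.Chain' N.E (φ u :: paths u v ++ [φ v])
  internal : ∀ u v : T.V, T.E u v → ∀ w ∈ paths u v, w ∉ Set.range φ
  disjoint : ∀ u v u' v' : T.V, T.E u v → T.E u' v' → (u, v) ≠ (u', v') →
    ∀ w ∈ paths u v, w ∉ paths u' v'

/-- The vertex list of the path used for the tree edge `(u,v)`. -/
def Emb.pathList {X : Type} {N T : Net X} (e : Emb N T) (u v : T.V) : List N.V :=
  e.φ u :: e.paths u v ++ [e.φ v]

/-- The set of edges of `N` used by the embedding. -/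
def Emb.edges {X : Type} {N T : Net X} (e : Emb N T) : Set (N.V × N.V) :=
  {q : N.V × N.V | ∃ u v : T.V, T.E u v ∧
    q ∈ (e.pathList u v).zip (e.pathList u v).tail}

/-- `N` displays the tree `T`. -/
def Net.Displays {X : Type} (N T : Net X) : Prop := Nonempty (Emb N T)

/-- The set of clusters of a tree (or network). -/
def Net.clusterSet {X : Type} (T : Net X) : Set (Set X) :=
  {C : Set X | ∃ v : T.V, T.cluster v = C}

/-- The display set of `N` is, up to isomorphism, the set `P` of binary
phylogenetic `X`-trees. -/
def Net.DisplaySetIs {X : Type} (N : Net X) (P : Set (Net X)) : Prop :=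
  ∀ T : Net X, T.IsBinTree → (N.Displays T ↔ ∃ S ∈ P, T.Iso S)

/-- `P` is tightly normal compatible: it is the display set of a binary normal
network on `X`. -/
def TightlyNC {X : Type} (P : Set (Net X)) : Prop :=
  ∃ N : Net X, N.Normal ∧ N.Binary ∧ N.DisplaySetIs P

namespace NetAux
open Relation Set List

variable {X : Type} {N : Net X}

lemma finiteV (N : Net X) : Finite N.V := Finite.of_fintype _

/-- recursion order going up (towards the root) -/
lemma wfA (N : Net X) : WellFounded (fun a b : N.V => Relation.TransGen N.E a b) := by
  haveI : Finite N.V := finiteV N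
  haveI : IsTrans N.V (fun a b : N.V => Relation.TransGen N.E a b) :=
    ⟨fun _ _ _ h h' => h.trans h'⟩
  haveI : IsIrrefl N.V (fun a b : N.V => Relation.TransGen N.E a b) :=
    ⟨fun a h => N.acyclic a h⟩
  exact Finite.wellFounded_of_trans_of_irrefl _

/-- recursion order going down (towards leaves) -/
lemma wfB (N : Net X) : WellFounded (fun a b : N.V => Relation.TransGen N.E b a) := by
  haveI : Finite N.V := finiteV N
  haveI : IsTrans N.V (fun a b : N.V => Relation.TransGen N.E b a) :=
    ⟨fun _ _ _ h h' => h'.trans h⟩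
  haveI : IsIrrefl N.V (fun a b : N.V => Relation.TransGen N.E b a) :=
    ⟨fun a h => N.acyclic a h⟩
  exact Finite.wellFounded_of_trans_of_irrefl _

lemma rtg_trans_of_ne {α : Type} {r : α → α → Prop} {a b : α} (h : Relation.ReflTransGen r a b)
    (hne : a ≠ b) : Relation.TransGen r a b := by
  rcases h.cases_head with rfl | ⟨c, hac, hcb⟩
  · exact absurd rfl hne
  · exact Relation.TransGen.head' hac hcb

lemma rtg_antisymm {a b : N.V} (h : Relation.ReflTransGen N.E a b)
    (h' : Relation.ReflTransGen N.E b a) : a = b := by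
  by_contra hne
  exact N.acyclic a (Relation.TransGen.trans_left (rtg_trans_of_ne h hne) h')

lemma not_E_self {a : N.V} : ¬ N.E a a := fun h => N.acyclic a (Relation.TransGen.single h)

lemma outdeg_zero_iff {v : N.V} : N.outdeg v = 0 ↔ ∀ c, ¬ N.E v c := by
  rw [Net.outdeg, Set.ncard_eq_zero (Set.toFinite _)]
  constructor
  · intro h c hc
    have : c ∈ {u : N.V | N.E v u} := hc
    simp [h] at this
  · intro h
    ext c; simp [h c]

lemma indeg_zero_iff {v : N.V} : N.indeg v = 0 ↔ ∀ c, ¬ N.E c v := by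
  rw [Net.indeg, Set.ncard_eq_zero (Set.toFinite _)]
  constructor
  · intro h c hc
    have : c ∈ {u : N.V | N.E u v} := hc
    simp [h] at this
  · intro h
    ext c; simp [h c]

lemma not_leaf_of_edge {v c : N.V} (hv : N.ValidNet) (h : N.E v c) : ¬ N.IsLeaf v := by
  rintro ⟨x, rfl⟩
  exact (outdeg_zero_iff.mp (hv.2.1 x).2) c h

lemma parent_exu_of_indeg_one {v : N.V} (h : N.indeg v = 1) : ∃! u, N.E u v := by
  rw [Net.indeg, Set.ncard_eq_one] at h
  rcases h with ⟨a, ha⟩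
  refine ⟨a, ?_, fun y hy => ?_⟩
  · have : a ∈ {u : N.V | N.E u v} := ha ▸ rfl
    exact this
  · have : y ∈ {u : N.V | N.E u v} := hy
    rw [ha] at this; exact this

lemma unique_of_indeg_le_one {v a b : N.V} (h : N.indeg v ≤ 1) (ha : N.E a v) (hb : N.E b v) :
    a = b := by
  by_contra hne
  have hsub : {a, b} ⊆ {u : N.V | N.E u v} := by
    rintro u (rfl | rfl); exacts [ha, hb]
  have h2 := Set.ncard_le_ncard hsub (Set.toFinite _)
  rw [Set.ncard_pair hne] at h2
  rw [Net.indeg] at h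
  omega

lemma not_retic_of_indeg_le_one {v : N.V} (h : N.indeg v ≤ 1) : ¬ N.IsReticulation v := by
  intro h2
  have h3 : 2 ≤ N.indeg v := h2
  rw [Net.indeg] at h3 h
  omega

lemma retic_indeg_pos {v : N.V} (h : N.IsReticulation v) : v ≠ N.root := by
  rintro rfl
  have h0 : N.indeg N.root = 0 := indeg_zero_iff.mpr N.no_in_root
  have h2 : 2 ≤ N.indeg N.root := h
  omega

lemma root_not_leaf (hv : N.ValidNet) : ¬ N.IsLeaf N.root := by
  rintro ⟨x, hx⟩
  have h2 := (hv.2.1 x).2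
  rw [hx] at h2
  rw [hv.1] at h2; omega

/-- classification of non-root vertices: in-degree is 1 unless reticulation -/
lemma parent_exu (hv : N.ValidNet) {v : N.V} (hroot : v ≠ N.root)
    (hretic : ¬ N.IsReticulation v) : ∃! u, N.E u v := by
  rcases Classical.em (N.IsLeaf v) with ⟨x, rfl⟩ | hnl
  · exact parent_exu_of_indeg_one (hv.2.1 x).1
  · rcases hv.2.2.2 v hroot hnl with ⟨h1, _⟩ | ⟨h2, _⟩
    · exact parent_exu_of_indeg_one h1
    · exact absurd h2 hretic

lemma outdeg_le_two (hv : N.ValidNet) (v : N.V) : N.outdeg v ≤ 2 := by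
  rcases Classical.em (v = N.root) with rfl | hroot
  · rw [hv.1]
  rcases Classical.em (N.IsLeaf v) with ⟨x, rfl⟩ | hnl
  · rw [(hv.2.1 x).2]; omega
  rcases hv.2.2.2 v hroot hnl with ⟨_, h⟩ | ⟨_, h⟩ <;> rw [h] <;> omega

lemma atmost_two_children (hv : N.ValidNet) {v c1 c2 c3 : N.V} (h1 : N.E v c1) (h2 : N.E v c2)
    (h3 : N.E v c3) : c1 = c2 ∨ c1 = c3 ∨ c2 = c3 := by
  by_contra h
  push_neg at h
  obtain ⟨h12, h13, h23⟩ := h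
  have hsub : {c1, c2, c3} ⊆ {u : N.V | N.E v u} := by
    rintro u (rfl | rfl | rfl); exacts [h1, h2, h3]
  have hle := Set.ncard_le_ncard hsub (Set.toFinite _)
  rw [Set.ncard_eq_three.mpr ⟨c1, c2, c3, h12, h13, h23, rfl⟩] at hle
  have := outdeg_le_two hv v
  rw [Net.outdeg] at this
  omega

lemma children_two (hv : N.ValidNet) {v : N.V} (h : N.outdeg v = 2) :
    ∃ c1 c2, c1 ≠ c2 ∧ N.E v c1 ∧ N.E v c2 ∧ ∀ c, N.E v c → c = c1 ∨ c = c2 := by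
  rw [Net.outdeg, Set.ncard_eq_two] at h
  rcases h with ⟨a, b, hab, hset⟩
  have ha : N.E v a := by have : a ∈ {u : N.V | N.E v u} := hset ▸ (by simp); exact this
  have hb : N.E v b := by have : b ∈ {u : N.V | N.E v u} := hset ▸ (by simp); exact this
  refine ⟨a, b, hab, ha, hb, fun c hc => ?_⟩
  have : c ∈ ({a, b} : Set N.V) := hset ▸ hc
  simpa using this

/-- parents of a reticulation are incomparable (no shortcut) -/
lemma retic_parents_incomp (hns : N.HasNoShortcut) {v p q : N.V} (hretic : N.IsReticulation v)
    (hp : N.E p v) (hq : N.E q v) (hpq : p ≠ q) (h : Relation.ReflTransGen N.E q p) : False :=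
  hns q v ⟨hq, hretic, p, hpq, hp, h⟩

lemma root_not_parent_of_retic (hv : N.ValidNet) (hb : N.Binary) (hns : N.HasNoShortcut)
    {v : N.V} (hretic : N.IsReticulation v) (h : N.E N.root v) : False := by
  have h2 : N.indeg v = 2 := hb v hretic
  rw [Net.indeg, Set.ncard_eq_two] at h2
  rcases h2 with ⟨a, b, hab, hset⟩
  have ha : N.E a v := by have : a ∈ {u : N.V | N.E u v} := hset ▸ (by simp); exact this
  have hb' : N.E b v := by have : b ∈ {u : N.V | N.E u v} := hset ▸ (by simp); exact this
  have hroot : N.root ∈ ({a, b} : Set N.V) := hset ▸ h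
  rcases hroot with rfl | rfl
  · exact retic_parents_incomp hns hretic hb' ha (Ne.symm hab) (N.connected b)
  · exact retic_parents_incomp hns hretic ha hb' hab (N.connected a)

/-- parents of a reticulation are not reticulations (tree-child) -/
lemma retic_parent_not_retic (hv : N.ValidNet) (htc : N.TreeChild) {v p : N.V}
    (hretic : N.IsReticulation v) (hp : N.E p v) : ¬ N.IsReticulation p := by
  intro hpre
  -- p is a reticulation: out-degree 1, and its unique child is v which has indeg ≥ 2
  have hpnl : ¬ N.IsLeaf p := by
    rintro ⟨x, rfl⟩
    exact (outdeg_zero_iff.mp ((hv).2.1 x).2) v hp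
  obtain ⟨c, hc, hcle⟩ := htc p hpnl
  -- p has outdeg 1
  have hproot : p ≠ N.root := retic_indeg_pos hpre
  have hout : N.outdeg p = 1 := by
    rcases hv.2.2.2 p hproot hpnl with ⟨h1, _⟩ | ⟨_, h2⟩
    · exact absurd (not_retic_of_indeg_le_one (le_of_eq h1) ) (not_not.mpr hpre)
    · exact h2
  -- unique child
  rw [Net.outdeg, Set.ncard_eq_one] at hout
  rcases hout with ⟨a, hset⟩
  have hva : v = a := by have : v ∈ {u : N.V | N.E p u} := hp; rw [hset] at this; exact this
  have hca : c = a := by have : c ∈ {u : N.V | N.E p u} := hc; rw [hset] at this; exact this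
  rw [← hva] at hca
  rw [← hca] at hretic
  exact not_retic_of_indeg_le_one hcle hretic

/-- every vertex has a tree path to some leaf -/
lemma treepath_exists (hv : N.ValidNet) (htc : N.TreeChild) (v : N.V) :
    ∃ x, Relation.ReflTransGen (fun a b => N.E a b ∧ N.indeg b ≤ 1) v (N.leaf x) := by
  induction v using WellFounded.induction (wfB N) with
  | _ v ih =>
    rcases Classical.em (N.IsLeaf v) with ⟨x, rfl⟩ | hnl
    · exact ⟨x, Relation.ReflTransGen.refl⟩
    · obtain ⟨c, hc, hcle⟩ := htc v hnl
      obtain ⟨x, hx⟩ := ih c (Relation.TransGen.single hc)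
      exact ⟨x, Relation.ReflTransGen.head ⟨hc, hcle⟩ hx⟩

end NetAux
namespace NetAux
open Relation Set List

variable {X : Type} {N : Net X}

/-- The pruned edge relation given a switching `σ`. -/
def prune (N : Net X) (σ : N.V → N.V) : N.V → N.V → Prop :=
  fun u v => N.E u v ∧ (N.IsReticulation v → σ v = u)

/-- The abstract properties of a pruned relation that we need. -/
structure Good (N : Net X) (R : N.V → N.V → Prop) : Prop where
  sub : ∀ ⦃u v⦄, R u v → N.E u v
  parent : ∀ v, v ≠ N.root → ∃! u, R u v
  child : ∀ v, ¬ N.IsLeaf v → ∃ c, R v c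
  root2 : ∃ c1 c2, c1 ≠ c2 ∧ R N.root c1 ∧ R N.root c2
  atmost2 : ∀ v c1 c2 c3, R v c1 → R v c2 → R v c3 → c1 = c2 ∨ c1 = c3 ∨ c2 = c3
  noleaf : ∀ (x : X) (c : N.V), ¬ N.E (N.leaf x) c

lemma prune_congr {σ σ' : N.V → N.V} (h : ∀ v, N.IsReticulation v → σ v = σ' v) :
    prune N σ = prune N σ' := by
  funext u v
  unfold prune
  by_cases hv : N.IsReticulation v
  · simp only [hv, forall_true_left, h v hv]
  · simp only [hv, IsEmpty.forall_iff, false_implies]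

lemma good_prune (hv : N.ValidNet) (htc : N.TreeChild) (hb : N.Binary) (hns : N.HasNoShortcut)
    {σ : N.V → N.V} (hσ : ∀ r, N.IsReticulation r → N.E (σ r) r) : Good N (prune N σ) where
  sub := fun _ _ h => h.1
  parent := by
    intro v hroot
    by_cases hret : N.IsReticulation v
    · refine ⟨σ v, ⟨hσ v hret, fun _ => rfl⟩, ?_⟩
      rintro y ⟨_, hy2⟩
      exact (hy2 hret).symm
    · obtain ⟨u, hu, huni⟩ := parent_exu hv hroot hret
      exact ⟨u, ⟨hu, fun h => absurd h hret⟩, fun y hy => huni y hy.1⟩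
  child := by
    intro v hnl
    obtain ⟨c, hc, hcle⟩ := htc v hnl
    exact ⟨c, hc, fun h => absurd h (not_retic_of_indeg_le_one hcle)⟩
  root2 := by
    obtain ⟨c1, c2, h12, h1, h2, _⟩ := children_two hv hv.1
    have k1 : ¬ N.IsReticulation c1 := fun hr => root_not_parent_of_retic hv hb hns hr h1
    have k2 : ¬ N.IsReticulation c2 := fun hr => root_not_parent_of_retic hv hb hns hr h2
    exact ⟨c1, c2, h12, ⟨h1, fun h => absurd h k1⟩, ⟨h2, fun h => absurd h k2⟩⟩
  atmost2 := fun v c1 c2 c3 h1 h2 h3 => atmost_two_children hv h1.1 h2.1 h3.1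
  noleaf := fun x c hc => (outdeg_zero_iff.mp (hv.2.1 x).2) c hc

section GoodSection

variable {R : N.V → N.V → Prop} (hg : Good N R)

/-- a vertex is kept (not suppressed) in the pruned graph -/
def kept (N : Net X) (R : N.V → N.V → Prop) (v : N.V) : Prop :=
  v = N.root ∨ N.IsLeaf v ∨ ∃ c1 c2, c1 ≠ c2 ∧ R v c1 ∧ R v c2

/-- step to a suppressed vertex -/
def Ms (N : Net X) (R : N.V → N.V → Prop) (a b : N.V) : Prop := R a b ∧ ¬ kept N R b

/-- step from a suppressed vertex -/
def Ss (N : Net X) (R : N.V → N.V → Prop) (a b : N.V) : Prop := R a b ∧ ¬ kept N R a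

/-- the edge relation of the suppressed tree, at the level of `N.V` -/
def tE (N : Net X) (R : N.V → N.V → Prop) (u v : N.V) : Prop :=
  ∃ w, Relation.ReflTransGen (Ms N R) u w ∧ R w v

lemma kept_root : kept N R N.root := Or.inl rfl

lemma kept_leaf (x : X) : kept N R (N.leaf x) := Or.inr (Or.inl ⟨x, rfl⟩)

include hg

lemma rtgR_sub {a b : N.V} (h : Relation.ReflTransGen R a b) : Relation.ReflTransGen N.E a b :=
  Relation.ReflTransGen.mono (fun _ _ hr => hg.sub hr) _ _ h

lemma R_irrefl {a : N.V} : ¬ R a a := fun h => not_E_self (hg.sub h)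

lemma rtgR_antisymm {a b : N.V} (h : Relation.ReflTransGen R a b)
    (h' : Relation.ReflTransGen R b a) : a = b :=
  rtg_antisymm (rtgR_sub hg h) (rtgR_sub hg h')

lemma R_ne_root {u v : N.V} (h : R u v) : v ≠ N.root := by
  rintro rfl; exact N.no_in_root u (hg.sub h)

lemma R_connected (v : N.V) : Relation.ReflTransGen R N.root v := by
  induction v using WellFounded.induction (wfA N) with
  | _ v ih =>
    rcases Classical.em (v = N.root) with rfl | hroot
    · exact Relation.ReflTransGen.refl
    · obtain ⟨u, hu, _⟩ := hg.parent v hroot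
      exact (ih u (Relation.TransGen.single (hg.sub hu))).tail hu

/-- ancestors in a unique-parent sub-relation are linearly ordered -/
lemma linearR {R' : N.V → N.V → Prop} (hsub : ∀ ⦃u v⦄, R' u v → R u v) {a b c : N.V}
    (hac : Relation.ReflTransGen R' a c) (hbc : Relation.ReflTransGen R' b c) :
    Relation.ReflTransGen R' a b ∨ Relation.ReflTransGen R' b a := by
  induction c using WellFounded.induction (wfA N) generalizing a b with
  | _ c ih =>
    rcases hac.cases_tail with rfl | ⟨w, haw, hwc⟩
    · exact Or.inr hbc
    rcases hbc.cases_tail with rfl | ⟨w', hbw', hw'c⟩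
    · exact Or.inl hac
    have hcroot : c ≠ N.root := R_ne_root hg (hsub hwc)
    obtain ⟨u, _, huni⟩ := hg.parent c hcroot
    have hww' : w = w' := by rw [huni w (hsub hwc), huni w' (hsub hw'c)]
    rw [← hww'] at hbw'
    exact ih w (Relation.TransGen.single (hg.sub (hsub hwc))) haw hbw'

/-- strip the last edge: unique parents -/
lemma stripR {R' : N.V → N.V → Prop} (hsub : ∀ ⦃u v⦄, R' u v → R u v) {u v w : N.V}
    (h : Relation.ReflTransGen R' u v) (hne : u ≠ v) (hw : R w v) :
    Relation.ReflTransGen R' u w := by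
  rcases h.cases_tail with rfl | ⟨w', hw', hwv⟩
  · exact absurd rfl hne
  · have hvroot : v ≠ N.root := R_ne_root hg hw
    obtain ⟨p, _, huni⟩ := hg.parent v hvroot
    have : w' = w := by rw [huni w' (hsub hwv), huni w hw]
    rwa [← this]

/-- a suppressed vertex has a unique child -/
lemma uchild_exu {v : N.V} (h : ¬ kept N R v) : ∃! c, R v c := by
  have hnl : ¬ N.IsLeaf v := fun hl => h (Or.inr (Or.inl hl))
  obtain ⟨c, hc⟩ := hg.child v hnl
  refine ⟨c, hc, fun y hy => ?_⟩
  by_contra hne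
  exact h (Or.inr (Or.inr ⟨y, c, hne, hy, hc⟩))

/-- every kept non-leaf vertex has exactly two children -/
lemma kept_two {v : N.V} (hk : kept N R v) (hnl : ¬ N.IsLeaf v) :
    ∃ c1 c2, c1 ≠ c2 ∧ R v c1 ∧ R v c2 ∧ ∀ c, R v c → c = c1 ∨ c = c2 := by
  have h2 : ∃ c1 c2, c1 ≠ c2 ∧ R v c1 ∧ R v c2 := by
    rcases hk with rfl | hl | h
    · exact hg.root2
    · exact absurd hl hnl
    · exact h
  obtain ⟨c1, c2, h12, h1, h2⟩ := h2
  refine ⟨c1, c2, h12, h1, h2, fun c hc => ?_⟩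
  rcases hg.atmost2 v c c1 c2 hc h1 h2 with h | h | h
  · exact Or.inl h
  · exact Or.inr h
  · exact absurd h h12

/-- every vertex reaches a leaf in the pruned graph -/
lemma reach_leaf (v : N.V) : ∃ x, Relation.ReflTransGen R v (N.leaf x) := by
  induction v using WellFounded.induction (wfB N) with
  | _ v ih =>
    rcases Classical.em (N.IsLeaf v) with ⟨x, rfl⟩ | hnl
    · exact ⟨x, Relation.ReflTransGen.refl⟩
    · obtain ⟨c, hc⟩ := hg.child v hnl
      obtain ⟨x, hx⟩ := ih c (Relation.TransGen.single (hg.sub hc))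
      exact ⟨x, Relation.ReflTransGen.head hc hx⟩

/-- chains of S-steps ending at the same vertex merge -/
lemma S_merge {a b c : N.V} (ha : Relation.ReflTransGen (Ss N R) a c)
    (hb : Relation.ReflTransGen (Ss N R) b c) (hka : kept N R a) (hkb : kept N R b) : a = b := by
  rcases linearR hg (fun _ _ h => h.1) ha hb with h | h
  · rcases h.cases_head with h' | ⟨w, hw, _⟩
    · exact h'
    · exact absurd hka hw.2
  · rcases h.cases_head with h' | ⟨w, hw, _⟩
    · exact h'.symm
    · exact absurd hkb hw.2

/-- chains of M-steps starting from kept vertices merge -/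
lemma M_merge {a b c : N.V} (ha : Relation.ReflTransGen (Ms N R) a c)
    (hb : Relation.ReflTransGen (Ms N R) b c) (hka : kept N R a) (hkb : kept N R b) : a = b := by
  rcases linearR hg (fun _ _ h => h.1) ha hb with h | h
  · rcases h.cases_tail with h' | ⟨w, _, hw⟩
    · exact h'.symm
    · exact absurd hkb hw.2
  · rcases h.cases_tail with h' | ⟨w, _, hw⟩
    · exact h'
    · exact absurd hka hw.2

/-- downward S-chains from a common vertex are linearly ordered -/
lemma S_linear_from {c y z : N.V} (hy : Relation.ReflTransGen (Ss N R) c y)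
    (hz : Relation.ReflTransGen (Ss N R) c z) :
    Relation.ReflTransGen (Ss N R) y z ∨ Relation.ReflTransGen (Ss N R) z y := by
  induction c using WellFounded.induction (wfB N) generalizing y z with
  | _ c ih =>
    rcases hy.cases_head with rfl | ⟨b, hcb, hby⟩
    · exact Or.inl hz
    rcases hz.cases_head with rfl | ⟨b', hcb', hb'z⟩
    · exact Or.inr hy
    obtain ⟨c0, _, huni⟩ := uchild_exu hg hcb.2
    have hbb : b = b' := by rw [huni b hcb.1, huni b' hcb'.1]
    rw [← hbb] at hb'z
    exact ih b (Relation.TransGen.single (hg.sub hcb.1)) hby hb'z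

omit hg in
lemma S_kept_start {y d : N.V} (hk : kept N R y) (h : Relation.ReflTransGen (Ss N R) y d) :
    y = d := by
  rcases h.cases_head with h' | ⟨w, hw, _⟩
  · exact h'
  · exact absurd hk hw.2

/-- the first kept descendant exists and is unique -/
lemma down_exu (c : N.V) : ∃! d, kept N R d ∧ Relation.ReflTransGen (Ss N R) c d := by
  have hex : ∃ d, kept N R d ∧ Relation.ReflTransGen (Ss N R) c d := by
    induction c using WellFounded.induction (wfB N) with
    | _ c ih =>
      by_cases hk : kept N R c
      · exact ⟨c, hk, Relation.ReflTransGen.refl⟩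
      · obtain ⟨b, hb, _⟩ := uchild_exu hg hk
        obtain ⟨d, hd, hchain⟩ := ih b (Relation.TransGen.single (hg.sub hb))
        exact ⟨d, hd, Relation.ReflTransGen.head ⟨hb, hk⟩ hchain⟩
  obtain ⟨d, hd⟩ := hex
  refine ⟨d, hd, fun y hy => ?_⟩
  rcases S_linear_from hg hy.2 hd.2 with h | h
  · exact S_kept_start hy.1 h
  · exact (S_kept_start hd.1 h).symm

/-- the first kept descendant -/
noncomputable def down (c : N.V) : N.V := (down_exu hg c).exists.choose

lemma down_kept (c : N.V) : kept N R (down hg c) := (down_exu hg c).exists.choose_spec.1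

lemma down_rtg (c : N.V) : Relation.ReflTransGen (Ss N R) c (down hg c) :=
  (down_exu hg c).exists.choose_spec.2

lemma down_eq {c d : N.V} (hk : kept N R d) (h : Relation.ReflTransGen (Ss N R) c d) :
    down hg c = d := by
  have h1 := (down_exu hg c).unique ⟨down_kept hg c, down_rtg hg c⟩ ⟨hk, h⟩
  exact h1

lemma down_of_kept {c : N.V} (hk : kept N R c) : down hg c = c :=
  down_eq hg hk Relation.ReflTransGen.refl

omit hg in
/-- `tE` in terms of S-chains -/
lemma tE_iff_S {u v : N.V} : tE N R u v ↔ ∃ c, R u c ∧ Relation.ReflTransGen (Ss N R) c v := by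
  constructor
  · rintro ⟨w, hmw, hwv⟩
    induction hmw using Relation.ReflTransGen.head_induction_on with
    | refl => exact ⟨v, hwv, Relation.ReflTransGen.refl⟩
    | head hab htail ih =>
      obtain ⟨c2, hc2, hchain⟩ := ih
      exact ⟨_, hab.1, Relation.ReflTransGen.head ⟨hc2, hab.2⟩ hchain⟩
  · rintro ⟨c, huc, hchain⟩
    induction hchain using Relation.ReflTransGen.head_induction_on generalizing u with
    | refl => exact ⟨u, Relation.ReflTransGen.refl, huc⟩
    | head hab htail ih =>
      obtain ⟨w, hmw, hwv⟩ := ih hab.1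
      exact ⟨w, Relation.ReflTransGen.head ⟨huc, hab.2⟩ hmw, hwv⟩

end GoodSection
end NetAux
namespace NetAux
open Relation Set List

variable {X : Type} {N : Net X} {R : N.V → N.V → Prop} (hg : Good N R)

omit hg in
lemma tE_transGen {u v : N.V} (h : tE N R u v) : Relation.TransGen R u v := by
  obtain ⟨w, hmw, hwv⟩ := h
  exact Relation.TransGen.tail' (Relation.ReflTransGen.mono (fun _ _ h => h.1) _ _ hmw) hwv

include hg

lemma tE_down {u c : N.V} (huc : R u c) : tE N R u (down hg c) :=
  tE_iff_S.mpr ⟨c, huc, down_rtg hg c⟩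

lemma tE_kept_char {u v : N.V} (hkv : kept N R v) :
    tE N R u v ↔ ∃ c, R u c ∧ down hg c = v := by
  rw [tE_iff_S]
  constructor
  · rintro ⟨c, hc, hchain⟩
    exact ⟨c, hc, down_eq hg hkv hchain⟩
  · rintro ⟨c, hc, rfl⟩
    exact ⟨c, hc, down_rtg hg c⟩

/-- `down` is injective on the children of a kept vertex -/
lemma down_inj {u c1 c2 : N.V} (hku : kept N R u) (h1 : R u c1) (h2 : R u c2)
    (hd : down hg c1 = down hg c2) : c1 = c2 := by
  by_contra hne
  have key : ∀ a b, a ≠ b → R u b → Relation.ReflTransGen (Ss N R) a b → False := by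
    intro a b hab hub h
    rcases h.cases_tail with h' | ⟨w, _, hw⟩
    · exact hab h'.symm
    · obtain ⟨p, _, huni⟩ := hg.parent b (R_ne_root hg hub)
      have hwu : w = u := by rw [huni w hw.1, huni u hub]
      rw [hwu] at hw
      exact hw.2 hku
  have h2d : Relation.ReflTransGen (Ss N R) c2 (down hg c1) := hd ▸ down_rtg hg c2
  rcases linearR hg (fun _ _ (h : Ss N R _ _) => h.1) (down_rtg hg c1) h2d with h | h
  · exact key c1 c2 hne h2 h
  · exact key c2 c1 (Ne.symm hne) h1 h

/-- a kept non-root vertex has a unique kept `tE`-parent -/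
lemma tE_parent_exists : ∀ {v : N.V}, v ≠ N.root →
    ∃ u, kept N R u ∧ tE N R u v := by
  intro v
  induction v using WellFounded.induction (wfA N) with
  | _ v ih =>
    intro hv
    obtain ⟨p, hp, _⟩ := hg.parent v hv
    by_cases hkp : kept N R p
    · exact ⟨p, hkp, ⟨p, Relation.ReflTransGen.refl, hp⟩⟩
    · have hproot : p ≠ N.root := fun h => hkp (h ▸ kept_root)
      obtain ⟨u, hku, w, hmw, hwp⟩ := ih p (Relation.TransGen.single (hg.sub hp)) hproot
      exact ⟨u, hku, ⟨p, hmw.tail ⟨hwp, hkp⟩, hp⟩⟩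

lemma tE_parent_unique {u u' v : N.V} (hku : kept N R u) (hku' : kept N R u')
    (h : tE N R u v) (h' : tE N R u' v) : u = u' := by
  obtain ⟨w, hmw, hwv⟩ := h
  obtain ⟨w', hmw', hw'v⟩ := h'
  obtain ⟨p, _, huni⟩ := hg.parent v (R_ne_root hg hwv)
  have hww : w = w' := by rw [huni w hwv, huni w' hw'v]
  rw [← hww] at hmw'
  exact M_merge hg hmw hmw' hku hku'

/-- climb an M-chain: if `u` is kept and reaches the end of the chain, it reaches the start -/
lemma climb {u a : N.V} (hku : kept N R u) :
    ∀ {w : N.V}, Relation.ReflTransGen (Ms N R) a w → Relation.ReflTransGen R u w →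
      Relation.ReflTransGen R u a := by
  intro w
  induction w using WellFounded.induction (wfA N) with
  | _ w ih =>
    intro hmw huw
    rcases hmw.cases_tail with h' | ⟨b, hab, hbw⟩
    · exact h' ▸ huw
    · have hne : u ≠ w := fun h => hbw.2 (h ▸ hku)
      have hub : Relation.ReflTransGen R u b := stripR hg (fun _ _ h => h) huw hne hbw.1
      exact ih b (Relation.TransGen.single (hg.sub hbw.1)) hab hub

/-- compress a pruned path between kept vertices to a `tE`-path in the subtype -/
lemma kept_compress {u : N.V} (hku : kept N R u) :
    ∀ {d : N.V} (hkd : kept N R d), Relation.ReflTransGen R u d →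
    Relation.ReflTransGen (fun a b : {v : N.V // kept N R v} => tE N R a.val b.val)
      ⟨u, hku⟩ ⟨d, hkd⟩ := by
  intro d
  induction d using WellFounded.induction (wfA N) with
  | _ d ih =>
    intro hkd hud
    rcases Classical.em (u = d) with rfl | hne
    · exact Relation.ReflTransGen.refl
    -- u is a strict ancestor of d
    have hdroot : d ≠ N.root := by
      rintro rfl
      rcases hud.cases_tail with h' | ⟨w, _, hw⟩
      · exact hne h'.symm
      · exact N.no_in_root w (hg.sub hw)
    obtain ⟨a, hka, hta⟩ := tE_parent_exists hg hdroot
    -- u reaches a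
    obtain ⟨w, hmw, hwd⟩ := hta
    have huw : Relation.ReflTransGen R u w := stripR hg (fun _ _ h => h) hud hne hwd
    -- climb the M-chain: RTG M a w ∧ RTG R u w ∧ kept u → RTG R u a
    have hua : Relation.ReflTransGen R u a := climb hg hku hmw huw
    have had : Relation.TransGen N.E a d := by
      have := tE_transGen ⟨w, hmw, hwd⟩
      exact Relation.TransGen.mono (fun _ _ h => hg.sub h) _ _ this
    exact (ih a had hka hua).tail ⟨w, hmw, hwd⟩
end NetAux
namespace NetAux
open Relation Set List

variable {X : Type} {N : Net X} {R : N.V → N.V → Prop} (hg : Good N R)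

omit hg in
lemma transGen_val {q : N.V → Prop} {x y : {v : N.V // q v}}
    (h : Relation.TransGen (fun a b : {v : N.V // q v} => Relation.TransGen N.E a.val b.val) x y) :
    Relation.TransGen N.E x.val y.val := by
  induction h with
  | single h => exact h
  | tail _ h ih => exact ih.trans h

/-- The binary tree obtained by pruning and suppressing. -/
noncomputable def treeOf (N : Net X) (R : N.V → N.V → Prop) (hg : Good N R) : Net X where
  V := {v : N.V // kept N R v}
  fintypeV := by
    haveI : Finite N.V := finiteV N
    exact Fintype.ofFinite _
  E := fun u v => tE N R u.val v.val
  root := ⟨N.root, kept_root⟩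
  leaf := fun x => ⟨N.leaf x, kept_leaf x⟩
  leaf_inj := fun x y h => N.leaf_inj (congrArg Subtype.val h)
  acyclic := by
    intro v hv
    exact N.acyclic v.val (transGen_val
      (Relation.TransGen.mono (fun a b h => Relation.TransGen.mono (fun _ _ h' => hg.sub h') _ _ (tE_transGen h)) _ _ hv))
  no_in_root := by
    rintro u ⟨w, _, hw⟩
    exact N.no_in_root w (hg.sub hw)
  connected := by
    rintro ⟨v, hkv⟩
    have : ∀ v : N.V, ∀ hkv : kept N R v,
        Relation.ReflTransGen (fun a b : {v : N.V // kept N R v} => tE N R a.val b.val)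
          ⟨N.root, kept_root⟩ ⟨v, hkv⟩ := by
      intro v
      induction v using WellFounded.induction (wfA N) with
      | _ v ih =>
        intro hkv
        rcases Classical.em (v = N.root) with rfl | hv
        · exact Relation.ReflTransGen.refl
        · obtain ⟨u, hku, htu⟩ := tE_parent_exists hg hv
          exact (ih u (Relation.TransGen.mono (fun _ _ h' => hg.sub h') _ _ (tE_transGen htu)) hku).tail htu
    exact this v hkv

lemma treeOf_V_kept (v : (treeOf N R hg).V) : kept N R v.val := v.property

lemma treeOf_E_iff (u v : (treeOf N R hg).V) : (treeOf N R hg).E u v ↔ tE N R u.val v.val :=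
  Iff.rfl

/-- helper: ncard of a subtype-level set equals the ncard of the val image -/
lemma ncard_subtype {α : Type} (q : α → Prop) (p : α → Prop) :
    {u : {x // q x} | p u.val}.ncard = {x : α | q x ∧ p x}.ncard := by
  rw [← Set.ncard_image_of_injOn (Set.injOn_of_injective Subtype.val_injective
    (s := {u : {x // q x} | p u.val}))]
  congr 1
  ext a
  constructor
  · rintro ⟨⟨b, hqb⟩, hpb, rfl⟩
    exact ⟨hqb, hpb⟩
  · rintro ⟨hqa, hpa⟩
    exact ⟨⟨a, hqa⟩, hpa, rfl⟩

lemma treeOf_indeg_root : (treeOf N R hg).indeg (treeOf N R hg).root = 0 := by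
  rw [Net.indeg]
  rw [Set.ncard_eq_zero (Set.toFinite _)]
  ext u
  simp only [Set.mem_setOf_eq, Set.mem_empty_iff_false, iff_false]
  exact fun h => (treeOf N R hg).no_in_root u h

lemma treeOf_indeg_nonroot {v : (treeOf N R hg).V} (hv : v ≠ (treeOf N R hg).root) :
    (treeOf N R hg).indeg v = 1 := by
  have hvval : v.val ≠ N.root := fun h => hv (Subtype.ext h)
  obtain ⟨u0, hku0, htu0⟩ := tE_parent_exists hg hvval
  rw [Net.indeg]
  have hset : {u : (treeOf N R hg).V | (treeOf N R hg).E u v} = {⟨u0, hku0⟩} := by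
    ext ⟨u, hku⟩
    show (treeOf N R hg).E ⟨u, hku⟩ v ↔ (⟨u, hku⟩ : (treeOf N R hg).V) = ⟨u0, hku0⟩
    constructor
    · intro h
      exact Subtype.ext (tE_parent_unique hg hku hku0 h htu0)
    · intro h
      cases h
      exact htu0
  rw [hset]
  exact Set.ncard_singleton _

end NetAux
namespace NetAux
open Relation Set List

variable {X : Type} {N : Net X} {R : N.V → N.V → Prop} (hg : Good N R)

include hg

lemma R_not_leaf {v c : N.V} (h : R v c) : ¬ N.IsLeaf v := by
  rintro ⟨x, rfl⟩
  exact hg.noleaf x c (hg.sub h)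

lemma leaf_ne_root (x : X) : N.leaf x ≠ N.root := by
  intro h
  obtain ⟨c1, _, _, h1, _⟩ := hg.root2
  exact hg.noleaf x c1 (hg.sub (h ▸ h1))

lemma ncard_tree_set (p : N.V → Prop) :
    {u : (treeOf N R hg).V | p u.val}.ncard = {x : N.V | kept N R x ∧ p x}.ncard :=
  ncard_subtype (kept N R) p

lemma root_not_leaf_good : ¬ N.IsLeaf N.root := by
  obtain ⟨c1, _, _, h1, _⟩ := hg.root2
  exact R_not_leaf hg h1

lemma treeOf_outdeg_two {v : (treeOf N R hg).V} (hnl : ¬ N.IsLeaf v.val) :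
    (treeOf N R hg).outdeg v = 2 := by
  obtain ⟨c1, c2, h12, h1, h2, hcl⟩ := kept_two hg v.property hnl
  rw [Net.outdeg]
  have h0 : {u : (treeOf N R hg).V | (treeOf N R hg).E v u} =
      {u : (treeOf N R hg).V | tE N R v.val u.val} := rfl
  rw [h0, ncard_tree_set hg]
  have himg : {x : N.V | kept N R x ∧ tE N R v.val x} = down hg '' {c : N.V | R v.val c} := by
    ext w
    constructor
    · rintro ⟨hkw, htw⟩
      obtain ⟨c, hc, hdc⟩ := (tE_kept_char hg hkw).mp htw
      exact ⟨c, hc, hdc⟩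
    · rintro ⟨c, hc, rfl⟩
      exact ⟨down_kept hg c, tE_down hg hc⟩
  rw [himg]
  rw [Set.ncard_image_of_injOn (s := {c : N.V | R v.val c}) (f := down hg)
    (fun a ha b hb hab => down_inj hg v.property ha hb hab)]
  have hch : {c : N.V | R v.val c} = {c1, c2} := by
    ext c
    constructor
    · intro hc
      rcases hcl c hc with rfl | rfl
      · exact Or.inl rfl
      · exact Or.inr rfl
    · rintro (rfl | rfl); exacts [h1, h2]
  rw [hch, Set.ncard_pair h12]

lemma treeOf_outdeg_leaf (x : X) : (treeOf N R hg).outdeg ((treeOf N R hg).leaf x) = 0 := by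
  rw [Net.outdeg, Set.ncard_eq_zero (Set.toFinite _)]
  ext u
  simp only [Set.mem_setOf_eq, Set.mem_empty_iff_false, iff_false]
  rintro ⟨w, hmw, hwu⟩
  rcases hmw.cases_head with rfl | ⟨c, hc, _⟩
  · exact hg.noleaf x u.val (hg.sub hwu)
  · exact hg.noleaf x c (hg.sub hc.1)

lemma treeOf_leaf_iff {v : (treeOf N R hg).V} :
    (treeOf N R hg).IsLeaf v ↔ N.IsLeaf v.val := by
  constructor
  · rintro ⟨x, rfl⟩
    exact ⟨x, rfl⟩
  · rintro ⟨x, hx⟩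
    exact ⟨x, Subtype.ext hx⟩

lemma treeOf_valid : (treeOf N R hg).ValidNet := by
  refine ⟨?_, ?_, ?_, ?_⟩
  · exact treeOf_outdeg_two hg (root_not_leaf_good hg)
  · intro x
    refine ⟨?_, treeOf_outdeg_leaf hg x⟩
    apply treeOf_indeg_nonroot hg
    intro h
    exact leaf_ne_root hg x (congrArg Subtype.val h)
  · intro v hout
    by_contra hnl
    have : ¬ N.IsLeaf v.val := fun h => hnl ((treeOf_leaf_iff hg).mpr h)
    rw [treeOf_outdeg_two hg this] at hout
    omega
  · intro v hroot hnl
    left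
    exact ⟨treeOf_indeg_nonroot hg hroot,
      treeOf_outdeg_two hg (fun h => hnl ((treeOf_leaf_iff hg).mpr h))⟩

lemma treeOf_isBinTree : (treeOf N R hg).IsBinTree := by
  refine ⟨treeOf_valid hg, ?_⟩
  intro v
  rcases Classical.em (v = (treeOf N R hg).root) with rfl | hv
  · rw [treeOf_indeg_root hg]; omega
  · rw [treeOf_indeg_nonroot hg hv]

/-- cluster of a pruned graph at the level of `N` -/
def clR (N : Net X) (R : N.V → N.V → Prop) (v : N.V) : Set X :=
  {x : X | Relation.ReflTransGen R v (N.leaf x)}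

omit hg in
lemma rtg_of_rtg_transGen {α : Type} {r : α → α → Prop} {x y : α}
    (h : Relation.ReflTransGen (fun a b => Relation.TransGen r a b) x y) :
    Relation.ReflTransGen r x y := by
  induction h with
  | refl => exact Relation.ReflTransGen.refl
  | tail _ h ih => exact ih.trans h.to_reflTransGen

lemma treeOf_cluster (v : (treeOf N R hg).V) :
    (treeOf N R hg).cluster v = clR N R v.val := by
  ext x
  constructor
  · intro h
    have h2 : Relation.ReflTransGen (fun a b => Relation.TransGen R a b) v.val (N.leaf x) := by
      have := Relation.ReflTransGen.lift (r := (treeOf N R hg).E)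
        (p := fun a b => Relation.TransGen R a b) Subtype.val
        (fun a b hab => tE_transGen hab) _ _ h
      exact this
    exact rtg_of_rtg_transGen h2
  · intro h
    have := kept_compress hg v.property (kept_leaf x) h
    exact this

lemma clR_nonempty (v : N.V) : (clR N R v).Nonempty := by
  obtain ⟨x, hx⟩ := reach_leaf hg v
  exact ⟨x, hx⟩

omit hg in
lemma clR_mono {u v : N.V} (h : Relation.ReflTransGen R u v) : clR N R v ⊆ clR N R u :=
  fun _ hx => h.trans hx

end NetAux
namespace NetAux
open Relation Set List

variable {X : Type} {N : Net X} {R : N.V → N.V → Prop} (hg : Good N R)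

include hg

lemma S_reach {b w v : N.V} (hmw : Relation.ReflTransGen (Ms N R) b w) (hwv : R w v)
    (hkb : ¬ kept N R b) : Relation.ReflTransGen (Ss N R) b v := by
  obtain ⟨c, hbc, hcv⟩ := tE_iff_S.mp ⟨w, hmw, hwv⟩
  exact Relation.ReflTransGen.head ⟨hbc, hkb⟩ hcv

lemma trail_exists {u v : N.V} (h : tE N R u v) :
    ∃ l : List N.V, List.Chain' N.E (u :: l ++ [v]) ∧
      ∀ w ∈ l, ¬ kept N R w ∧ Relation.ReflTransGen (Ss N R) w v ∧
        Relation.ReflTransGen (Ms N R) u w := by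
  obtain ⟨w, hmw, hwv⟩ := h
  induction hmw using Relation.ReflTransGen.head_induction_on with
  | refl =>
    refine ⟨[], ?_, by simp⟩
    exact List.isChain_cons_cons.mpr ⟨hg.sub hwv, List.isChain_singleton v⟩
  | head hab htail ih =>
    obtain ⟨l', hchain, hprops⟩ := ih
    rename_i a b
    refine ⟨b :: l', ?_, ?_⟩
    · simp only [List.cons_append] at hchain ⊢
      exact List.isChain_cons_cons.mpr ⟨hg.sub hab.1, hchain⟩
    · intro w' hw'
      rcases List.mem_cons.mp hw' with rfl | hw'
      · exact ⟨hab.2, S_reach hg htail hwv hab.2, Relation.ReflTransGen.single hab⟩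
      · obtain ⟨h1, h2, h3⟩ := hprops w' hw'
        exact ⟨h1, h2, Relation.ReflTransGen.head hab h3⟩

open Classical in
/-- the interior path used for a tree edge -/
noncomputable def pathsFor (u v : (treeOf N R hg).V) : List N.V :=
  if h : (treeOf N R hg).E u v then (trail_exists hg h).choose else []

lemma pathsFor_chain {u v : (treeOf N R hg).V} (h : (treeOf N R hg).E u v) :
    List.Chain' N.E (u.val :: pathsFor hg u v ++ [v.val]) := by
  rw [pathsFor, dif_pos h]
  exact (trail_exists hg h).choose_spec.1

lemma pathsFor_props {u v : (treeOf N R hg).V} (h : (treeOf N R hg).E u v) {w : N.V}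
    (hw : w ∈ pathsFor hg u v) :
    ¬ kept N R w ∧ Relation.ReflTransGen (Ss N R) w v.val ∧
      Relation.ReflTransGen (Ms N R) u.val w := by
  rw [pathsFor, dif_pos h] at hw
  exact (trail_exists hg h).choose_spec.2 w hw

/-- the embedding of the suppressed tree in `N` -/
noncomputable def embOf : Emb N (treeOf N R hg) where
  φ := Subtype.val
  inj := Subtype.val_injective
  leafmap := fun _ => rfl
  paths := pathsFor hg
  chain := fun u v h => pathsFor_chain hg h
  internal := by
    intro u v h w hw hrange
    obtain ⟨h1, _, _⟩ := pathsFor_props hg h hw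
    obtain ⟨⟨a, ha⟩, rfl⟩ := hrange
    exact h1 ha
  disjoint := by
    intro u v u' v' he he' hne w hw hw'
    obtain ⟨hk1, hs1, hm1⟩ := pathsFor_props hg he hw
    obtain ⟨_, hs2, hm2⟩ := pathsFor_props hg he' hw'
    apply hne
    have hv : v = v' := by
      apply Subtype.ext
      rw [← down_eq hg v.property hs1, ← down_eq hg v'.property hs2]
    have hu : u = u' := Subtype.ext (M_merge hg hm1 hm2 u.property u'.property)
    rw [hu, hv]

lemma displays_treeOf : N.Displays (treeOf N R hg) := ⟨embOf hg⟩

end NetAux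
namespace NetAux
open Relation Set List

variable {X : Type} {N : Net X}

lemma iso_cluster {M M' : Net X} (e : M.V ≃ M'.V)
    (hE : ∀ u v : M.V, M.E u v ↔ M'.E (e u) (e v))
    (hleaf : ∀ x : X, e (M.leaf x) = M'.leaf x) (v : M.V) :
    M'.cluster (e v) = M.cluster v := by
  ext x
  constructor
  · intro h
    have h2 : Relation.ReflTransGen M.E (e.symm (e v)) (e.symm (M'.leaf x)) := Relation.ReflTransGen.lift e.symm
      (fun a b hab => (hE (e.symm a) (e.symm b)).mpr
        (by rwa [e.apply_symm_apply, e.apply_symm_apply])) _ _ h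
    rw [e.symm_apply_apply] at h2
    rw [show e.symm (M'.leaf x) = M.leaf x from by rw [← hleaf x, e.symm_apply_apply]] at h2
    exact h2
  · intro h
    have h2 : Relation.ReflTransGen M'.E (e v) (e (M.leaf x)) := Relation.ReflTransGen.lift e (fun a b hab => (hE a b).mp hab) _ _ h
    rwa [hleaf x] at h2

lemma prune_reach_agree {σ σ' : N.V → N.V} {r u : N.V}
    (hagree : ∀ r', N.IsReticulation r' → Relation.TransGen N.E r r' → σ r' = σ' r')
    (h : Relation.ReflTransGen (prune N σ) r u) : Relation.ReflTransGen (prune N σ') r u := by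
  induction h with
  | refl => exact Relation.ReflTransGen.refl
  | tail hru hstep ih =>
    rename_i b c
    refine ih.tail ⟨hstep.1, fun hret => ?_⟩
    have htg : Relation.TransGen N.E r c :=
      Relation.TransGen.tail' (Relation.ReflTransGen.mono (fun _ _ h' => h'.1) _ _ hru) hstep.1
    rw [← hagree c hret htg]
    exact hstep.2 hret

lemma children_pair (hv : N.ValidNet) {v a b : N.V} (ha : N.E v a) (hb : N.E v b) (hab : a ≠ b)
    {c : N.V} (hc : N.E v c) : c = a ∨ c = b := by
  rcases atmost_two_children hv hc ha hb with h | h | h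
  · exact Or.inl h
  · exact Or.inr h
  · exact absurd h hab

lemma treepath_in_prune {σ : N.V → N.V} {v w : N.V}
    (h : Relation.ReflTransGen (fun a b => N.E a b ∧ N.indeg b ≤ 1) v w) :
    Relation.ReflTransGen (prune N σ) v w :=
  Relation.ReflTransGen.mono (fun _ _ hab => ⟨hab.1, fun hret => absurd hret (not_retic_of_indeg_le_one hab.2)⟩) _ _ h

/-- The key distinguishing lemma: switchings differing at a lowest reticulation give
non-isomorphic suppressed trees. -/
lemma distinguish (hv : N.ValidNet) (htc : N.TreeChild) (hb : N.Binary) (hns : N.HasNoShortcut)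
    {σ σ' : N.V → N.V} (hσ : ∀ r, N.IsReticulation r → N.E (σ r) r)
    (hσ' : ∀ r, N.IsReticulation r → N.E (σ' r) r) {r : N.V} (hr : N.IsReticulation r)
    (hdiff : σ r ≠ σ' r)
    (hmin : ∀ r', N.IsReticulation r' → Relation.TransGen N.E r r' → σ r' = σ' r') :
    ¬ (treeOf N (prune N σ) (good_prune hv htc hb hns hσ)).Iso
      (treeOf N (prune N σ') (good_prune hv htc hb hns hσ')) := by
  set R := prune N σ with hR
  set R' := prune N σ' with hR'
  have hgσ : Good N R := good_prune hv htc hb hns hσ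
  have hgσ' : Good N R' := good_prune hv htc hb hns hσ'
  rintro ⟨e, hE, hleaf⟩
  set p := σ r with hp
  set q := σ' r with hq
  have hpE : N.E p r := hσ r hr
  have hqE : N.E q r := hσ' r hr
  have hpq : p ≠ q := hdiff
  have hpR : R p r := ⟨hpE, fun _ => rfl⟩
  have hqR' : R' q r := ⟨hqE, fun _ => rfl⟩
  have hpnr : ¬ N.IsReticulation p := retic_parent_not_retic hv htc hr hpE
  have hpnl : ¬ N.IsLeaf p := not_leaf_of_edge hv hpE
  have hqnl : ¬ N.IsLeaf q := not_leaf_of_edge hv hqE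
  -- the non-reticulate children
  obtain ⟨cp, hcp, hcple⟩ := htc p hpnl
  obtain ⟨cq, hcq, hcqle⟩ := htc q hqnl
  have hcpr : cp ≠ r := fun h => (not_retic_of_indeg_le_one hcple) (h ▸ hr)
  have hcqr : cq ≠ r := fun h => (not_retic_of_indeg_le_one hcqle) (h ▸ hr)
  have hRpcp : R p cp := ⟨hcp, fun h => absurd h (not_retic_of_indeg_le_one hcple)⟩
  have hRqcq : R q cq := ⟨hcq, fun h => absurd h (not_retic_of_indeg_le_one hcqle)⟩
  have hR'qcq : R' q cq := ⟨hcq, fun h => absurd h (not_retic_of_indeg_le_one hcqle)⟩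
  have hkp : kept N R p := Or.inr (Or.inr ⟨r, cp, fun h => hcpr h.symm, hpR, hRpcp⟩)
  -- transfer of clusters below r between the two prunings
  have hagree : ∀ u, Relation.ReflTransGen R' r u → Relation.ReflTransGen R r u := by
    intro u hu
    exact prune_reach_agree (fun r' h1 h2 => (hmin r' h1 h2).symm) hu
  -- the image vertex
  set vT : (treeOf N R hgσ).V := ⟨p, hkp⟩ with hvT
  set w := e vT with hw
  have hkw : kept N R' w.val := w.property
  have hclw : clR N R' w.val = clR N R p := by
    have h1 := treeOf_cluster hgσ vT
    have h2 := treeOf_cluster hgσ' w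
    have h3 := iso_cluster e hE hleaf vT
    rw [h2, h1] at h3
    exact h3
  -- some useful leaves
  obtain ⟨z, hz⟩ := reach_leaf hgσ' r
  obtain ⟨y2, hy2⟩ := reach_leaf hgσ cp
  obtain ⟨y, hy⟩ := treepath_exists hv htc cq
  have hyR : Relation.ReflTransGen R cq (N.leaf y) := treepath_in_prune hy
  have hyR' : Relation.ReflTransGen R' cq (N.leaf y) := treepath_in_prune hy
  -- incomparability facts
  have noRcp_r : ¬ Relation.ReflTransGen R cp r := by
    intro h
    have h2 : Relation.ReflTransGen R cp p := stripR hgσ (fun _ _ h => h) h hcpr hpR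
    have h3 : cp = p := rtg_antisymm (rtgR_sub hgσ h2) (Relation.ReflTransGen.single hcp)
    rw [h3] at hcp
    exact not_E_self hcp
  have noRr_cp : ¬ Relation.ReflTransGen R r cp := by
    intro h
    have hne : r ≠ cp := fun h' => hcpr h'.symm
    have h2 : Relation.ReflTransGen R r p := stripR hgσ (fun _ _ h => h) h hne hRpcp
    have h3 : r = p := rtg_antisymm (rtgR_sub hgσ h2) (Relation.ReflTransGen.single hpE)
    rw [← h3] at hpE
    exact not_E_self hpE
  -- z-based linearity
  have hzR : Relation.ReflTransGen R r (N.leaf z) := hagree _ hz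
  have hzA : (z : X) ∈ clR N R p := Relation.ReflTransGen.head hpR hzR
  have hzw : Relation.ReflTransGen R' w.val (N.leaf z) := by
    have : (z : X) ∈ clR N R' w.val := hclw ▸ hzA
    exact this
  -- main case analysis
  have hcase := linearR hgσ' (fun _ _ (h : R' _ _) => h) hzw hz
  have hkey1 : ¬ Relation.ReflTransGen R' r w.val := by
    intro h1
    have hsub : clR N R' w.val ⊆ clR N R' r := clR_mono h1
    have hy2A : (y2 : X) ∈ clR N R p := Relation.ReflTransGen.head hRpcp hy2
    have hy2r : Relation.ReflTransGen R' r (N.leaf y2) := hsub (hclw ▸ hy2A)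
    have hy2R : Relation.ReflTransGen R r (N.leaf y2) := hagree _ hy2r
    rcases linearR hgσ (fun _ _ (h : R _ _) => h) hy2R hy2 with h | h
    · exact noRr_cp h
    · exact noRcp_r h
  rcases hcase with h1 | h1
  swap
  · -- w is weakly below r
    exact hkey1 h1
  · -- w is weakly above r : its chain to r passes through q
    have hwr : w.val ≠ r := by
      rintro h
      exact hkey1 (h ▸ Relation.ReflTransGen.refl)
    have hwq : Relation.ReflTransGen R' w.val q := stripR hgσ' (fun _ _ h => h) h1 hwr hqR'
    have hyA : (y : X) ∈ clR N R p := by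
      rw [← hclw]
      exact (hwq.tail hR'qcq).trans hyR'
    -- now analyse the position of y in the σ-tree below p
    rcases hyA.cases_head with hply | ⟨c'', hpc'', hc''y⟩
    · exact hpnl ⟨y, hply.symm⟩
    rcases children_pair hv hpE hcp (fun h => hcpr h.symm) (hgσ.sub hpc'') with hc'' | hc''
    · -- the first step from p goes to r
      rw [hc''] at hc''y
      rcases linearR hgσ (fun _ _ (h : R _ _) => h) hc''y hyR with h | h
      · -- RTG R r cq
        have h2 : Relation.ReflTransGen R r q :=
          stripR hgσ (fun _ _ h => h) h (fun h' => hcqr h'.symm) hRqcq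
        have h3 : r = q := rtg_antisymm (rtgR_sub hgσ h2) (Relation.ReflTransGen.single hqE)
        rw [← h3] at hqE
        exact not_E_self hqE
      · -- RTG R cq r
        have h2 : Relation.ReflTransGen R cq p := stripR hgσ (fun _ _ h => h) h hcqr hpR
        have h3 : Relation.ReflTransGen N.E q p :=
          Relation.ReflTransGen.head hcq (rtgR_sub hgσ h2)
        exact retic_parents_incomp hns hr hpE hqE hpq h3
    · -- the first step from p goes to cp
      rw [hc''] at hc''y
      have hcpcq : cp ≠ cq := by
        rintro h'
        rw [h'] at hcp
        exact hpq (unique_of_indeg_le_one hcqle hcp hcq)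
      rcases linearR hgσ (fun _ _ (h : R _ _) => h) hc''y hyR with h | h
      · -- RTG R cp cq
        have h2 : Relation.ReflTransGen R cp q := stripR hgσ (fun _ _ h => h) h hcpcq hRqcq
        have h3 : Relation.ReflTransGen N.E p q :=
          Relation.ReflTransGen.head hcp (rtgR_sub hgσ h2)
        exact retic_parents_incomp hns hr hqE hpE (Ne.symm hpq) h3
      · -- RTG R cq cp
        have h2 : Relation.ReflTransGen R cq p :=
          stripR hgσ (fun _ _ h => h) h (Ne.symm hcpcq) hRpcp
        have h3 : Relation.ReflTransGen N.E q p :=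
          Relation.ReflTransGen.head hcq (rtgR_sub hgσ h2)
        exact retic_parents_incomp hns hr hpE hqE hpq h3
end NetAux
namespace NetAux
open Relation Set List

variable {X : Type} {N : Net X}

lemma chain'_pair {α : Type} {r : α → α → Prop} :
    ∀ {L : List α}, List.Chain' r L → ∀ {a b : α}, (a, b) ∈ L.zip L.tail → r a b := by
  intro L
  induction L with
  | nil => intro _ a b h; simp at h
  | cons x M ih =>
    intro hL a b h
    cases M with
    | nil => simp at h
    | cons m M' =>
      rw [List.tail_cons, List.zip_cons_cons] at h
      rcases List.mem_cons.mp h with h' | h'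
      · rw [Prod.mk.injEq] at h'
        rw [h'.1, h'.2]
        exact (List.isChain_cons_cons.mp hL).1
      · exact ih (List.isChain_cons_cons.mp hL).2 h'

lemma chain'_mem_transGen {α : Type} {r : α → α → Prop} :
    ∀ {M : List α} {x y : α}, List.Chain' r (x :: M) → y ∈ M → Relation.TransGen r x y := by
  intro M
  induction M with
  | nil => intro x y _ h; simp at h
  | cons m M' ih =>
    intro x y hL hy
    obtain ⟨hxm, hchain⟩ := List.isChain_cons_cons.mp hL
    rcases List.mem_cons.mp hy with rfl | hy'
    · exact Relation.TransGen.single hxm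
    · exact Relation.TransGen.head hxm (ih hchain hy')

lemma chain'_nodup : ∀ {L : List N.V}, List.Chain' N.E L → L.Nodup := by
  intro L
  induction L with
  | nil => intro _; exact List.nodup_nil
  | cons x M ih =>
    intro hL
    rw [List.nodup_cons]
    refine ⟨?_, ih hL.tail⟩
    intro hx
    exact N.acyclic x (chain'_mem_transGen hL hx)

lemma zip_succ_unique {α : Type} :
    ∀ {L : List α}, L.Nodup → ∀ {a b b' : α}, (a, b) ∈ L.zip L.tail →
      (a, b') ∈ L.zip L.tail → b = b' := by
  intro L
  induction L with
  | nil => intro _ a b b' h; simp at h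
  | cons x M ih =>
    intro hnd a b b' h h'
    cases M with
    | nil => simp at h
    | cons m M' =>
      rw [List.tail_cons, List.zip_cons_cons] at h h'
      have hxM : x ∉ (m :: M') := (List.nodup_cons.mp hnd).1
      rcases List.mem_cons.mp h with h1 | h1 <;> rcases List.mem_cons.mp h' with h2 | h2
      · rw [Prod.mk.injEq] at h1 h2
        exact h1.2.trans h2.2.symm
      · rw [Prod.mk.injEq] at h1
        exact absurd (h1.1 ▸ (List.of_mem_zip h2).1) hxM
      · rw [Prod.mk.injEq] at h2
        exact absurd (h2.1 ▸ (List.of_mem_zip h1).1) hxM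
      · exact ih (List.nodup_cons.mp hnd).2 h1 h2

lemma zip_pred_unique {α : Type} :
    ∀ {L : List α}, L.Nodup → ∀ {a a' b : α}, (a, b) ∈ L.zip L.tail →
      (a', b) ∈ L.zip L.tail → a = a' := by
  intro L
  induction L with
  | nil => intro _ a a' b h; simp at h
  | cons x M ih =>
    intro hnd a a' b h h'
    cases M with
    | nil => simp at h
    | cons m M' =>
      rw [List.tail_cons, List.zip_cons_cons] at h h'
      have hmM : m ∉ M' := (List.nodup_cons.mp (List.nodup_cons.mp hnd).2).1
      rcases List.mem_cons.mp h with h1 | h1 <;> rcases List.mem_cons.mp h' with h2 | h2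
      · rw [Prod.mk.injEq] at h1 h2
        exact h1.1.trans h2.1.symm
      · rw [Prod.mk.injEq] at h1
        have : b ∈ (m :: M').tail := (List.of_mem_zip h2).2
        rw [List.tail_cons] at this
        exact absurd (h1.2 ▸ this) hmM
      · rw [Prod.mk.injEq] at h2
        have : b ∈ (m :: M').tail := (List.of_mem_zip h1).2
        rw [List.tail_cons] at this
        exact absurd (h2.2 ▸ this) hmM
      · exact ih (List.nodup_cons.mp hnd).2 h1 h2

lemma rtg_mem_zip {α : Type} :
    ∀ (l : List α) (x y : α),
      Relation.ReflTransGen (fun a b => (a, b) ∈ ((x :: (l ++ [y])).zip (l ++ [y]))) x y := by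
  intro l
  induction l with
  | nil =>
    intro x y
    exact Relation.ReflTransGen.single (by simp)
  | cons c l' ih =>
    intro x y
    have hstep : (x, c) ∈ ((x :: ((c :: l') ++ [y])).zip (((c :: l') ++ [y]))) := by
      simp
    refine Relation.ReflTransGen.head hstep ?_
    refine Relation.ReflTransGen.mono ?_ _ _ (ih c y)
    intro a b hab
    simp only [List.cons_append, List.zip_cons_cons]
    exact List.mem_cons_of_mem _ hab

end NetAux
namespace NetAux
open Relation Set List

variable {X : Type} {N : Net X} {T : Net X}

/-- the edges used by an embedding -/
def usedE (e : Emb N T) (a b : N.V) : Prop := (a, b) ∈ e.edges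

lemma used_E {e : Emb N T} {a b : N.V} (h : usedE e a b) : N.E a b := by
  obtain ⟨t, s, hts, hmem⟩ := h
  exact chain'_pair (e.chain t s hts) hmem

lemma nodup_pathList (e : Emb N T) {t s : T.V} (h : T.E t s) : (e.pathList t s).Nodup :=
  chain'_nodup (e.chain t s h)

lemma mem_tail_pathList {e : Emb N T} {t s : T.V} {w : N.V}
    (hw : w ∈ (e.pathList t s).tail) : w ∈ e.paths t s ∨ w = e.φ s := by
  have : w ∈ e.paths t s ++ [e.φ s] := hw
  rcases List.mem_append.mp this with h | h
  · exact Or.inl h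
  · exact Or.inr (List.mem_singleton.mp h)

lemma used_in_unique (hT : T.IsBinTree) (e : Emb N T) {u u' w : N.V}
    (h : usedE e u w) (h' : usedE e u' w) : u = u' := by
  obtain ⟨t, s, hts, hmem⟩ := h
  obtain ⟨t', s', hts', hmem'⟩ := h'
  have hw : w ∈ (e.pathList t s).tail := (List.of_mem_zip hmem).2
  have hw' : w ∈ (e.pathList t' s').tail := (List.of_mem_zip hmem').2
  have hsame : t = t' ∧ s = s' := by
    rcases mem_tail_pathList hw with h1 | h1 <;> rcases mem_tail_pathList hw' with h2 | h2
    · by_contra hne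
      have : (t, s) ≠ (t', s') := fun hp => hne ⟨congrArg Prod.fst hp, congrArg Prod.snd hp⟩
      exact e.disjoint t s t' s' hts hts' this w h1 h2
    · exact absurd ⟨s', h2 ▸ rfl⟩ (e.internal t s hts w h1)
    · exact absurd ⟨s, h1 ▸ rfl⟩ (e.internal t' s' hts' w h2)
    · have hss : s = s' := e.inj (h1 ▸ h2 ▸ rfl)
      rw [← hss] at hts'
      exact ⟨unique_of_indeg_le_one (hT.2 s) hts hts', hss⟩
  obtain ⟨rfl, rfl⟩ := hsame
  exact zip_pred_unique (nodup_pathList e hts) hmem hmem'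

lemma used_out_unique (e : Emb N T) {v b b' : N.V} (hv : v ∉ Set.range e.φ)
    (h : usedE e v b) (h' : usedE e v b') : b = b' := by
  obtain ⟨t, s, hts, hmem⟩ := h
  obtain ⟨t', s', hts', hmem'⟩ := h'
  have hv1 : v ∈ e.pathList t s := (List.of_mem_zip hmem).1
  have hv2 : v ∈ e.pathList t' s' := (List.of_mem_zip hmem').1
  have hp1 : v ∈ e.paths t s := by
    rcases List.mem_cons.mp hv1 with h1 | h1
    · exact absurd ⟨t, h1.symm⟩ hv
    rcases List.mem_append.mp h1 with h2 | h2
    · exact h2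
    · exact absurd ⟨s, (List.mem_singleton.mp h2).symm⟩ hv
  have hp2 : v ∈ e.paths t' s' := by
    rcases List.mem_cons.mp hv2 with h1 | h1
    · exact absurd ⟨t', h1.symm⟩ hv
    rcases List.mem_append.mp h1 with h2 | h2
    · exact h2
    · exact absurd ⟨s', (List.mem_singleton.mp h2).symm⟩ hv
  have hsame : (t, s) = (t', s') := by
    by_contra hne
    exact e.disjoint t s t' s' hts hts' hne v hp1 hp2
  have h1 : t = t' := congrArg Prod.fst hsame
  have h2 : s = s' := congrArg Prod.snd hsame
  subst h1; subst h2
  exact zip_succ_unique (nodup_pathList e hts) hmem hmem'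

lemma first_pair (e : Emb N T) {t s : T.V} (hts : T.E t s) :
    ∃ b, usedE e (e.φ t) b ∧ (b = e.φ s ∨ b ∈ e.paths t s) := by
  cases hpl : e.paths t s with
  | nil =>
    refine ⟨e.φ s, ⟨t, s, hts, ?_⟩, Or.inl rfl⟩
    show (e.φ t, e.φ s) ∈ (e.pathList t s).zip (e.pathList t s).tail
    rw [Emb.pathList, hpl]
    simp
  | cons c l =>
    refine ⟨c, ⟨t, s, hts, ?_⟩, Or.inr (hpl ▸ List.mem_cons_self (a := c) (l := l))⟩
    show (e.φ t, c) ∈ (e.pathList t s).zip (e.pathList t s).tail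
    rw [Emb.pathList, hpl]
    simp

lemma usedRTG (e : Emb N T) {t s : T.V} (hts : T.E t s) :
    Relation.ReflTransGen (usedE e) (e.φ t) (e.φ s) := by
  refine Relation.ReflTransGen.mono ?_ _ _ (rtg_mem_zip (e.paths t s) (e.φ t) (e.φ s))
  intro a b hab
  exact ⟨t, s, hts, hab⟩

lemma usedRTG_trans (e : Emb N T) {t s : T.V} (h : Relation.ReflTransGen T.E t s) :
    Relation.ReflTransGen (usedE e) (e.φ t) (e.φ s) := by
  induction h with
  | refl => exact Relation.ReflTransGen.refl
  | tail _ hstep ih => exact ih.trans (usedRTG e hstep)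

lemma bin_parent (hT : T.IsBinTree) {v : T.V} (hv : v ≠ T.root) : ∃! u, T.E u v := by
  apply parent_exu_of_indeg_one
  rcases Classical.em (T.IsLeaf v) with ⟨x, rfl⟩ | hnl
  · exact (hT.1.2.1 x).1
  · rcases hT.1.2.2.2 v hv hnl with ⟨h1, _⟩ | ⟨h2, _⟩
    · exact h1
    · have h3 : (2:ℕ) ≤ 1 := le_trans h2 (hT.2 v)
      omega

lemma bin_outdeg_two (hT : T.IsBinTree) {v : T.V} (hnl : ¬ T.IsLeaf v) : T.outdeg v = 2 := by
  rcases Classical.em (v = T.root) with rfl | hv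
  · exact hT.1.1
  · rcases hT.1.2.2.2 v hv hnl with ⟨_, h⟩ | ⟨h2, _⟩
    · exact h
    · have h3 : (2:ℕ) ≤ 1 := le_trans h2 (hT.2 v)
      omega

/-- build a `tE`-edge from a chain whose interior is suppressed -/
lemma tE_of_list {R : N.V → N.V → Prop} :
    ∀ (l : List N.V) (u v : N.V),
      (∀ a b : N.V, (a, b) ∈ ((u :: (l ++ [v])).zip (l ++ [v])) → R a b) →
      (∀ w ∈ l, ¬ kept N R w) → tE N R u v := by
  intro l
  induction l with
  | nil =>
    intro u v hpairs _
    exact ⟨u, Relation.ReflTransGen.refl, hpairs u v (by simp)⟩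
  | cons c l' ih =>
    intro u v hpairs hsupp
    have hRuc : R u c := hpairs u c (by simp)
    have hkc : ¬ kept N R c := hsupp c List.mem_cons_self
    obtain ⟨w, hmw, hwv⟩ := ih c v
      (fun a b hab => hpairs a b (by
        simp only [List.cons_append, List.zip_cons_cons]
        exact List.mem_cons_of_mem _ hab))
      (fun w hw => hsupp w (List.mem_cons_of_mem c hw))
    exact ⟨w, Relation.ReflTransGen.head ⟨hRuc, hkc⟩ hmw, hwv⟩

open Classical in
/-- the switching induced by an embedding -/
noncomputable def sigOf (e : Emb N T) : N.V → N.V := fun r =>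
  if h : ∃ u, usedE e u r then h.choose
  else if h2 : ∃ u, N.E u r then h2.choose else r

lemma sigOf_valid (hb : N.Binary) (e : Emb N T) :
    ∀ r, N.IsReticulation r → N.E (sigOf e r) r := by
  intro r hr
  rw [sigOf]
  split
  · next h => exact used_E h.choose_spec
  · next h =>
    have h2 : ∃ u, N.E u r := by
      have hcard : N.indeg r = 2 := hb r hr
      rw [Net.indeg] at hcard
      obtain ⟨u, hu⟩ := Set.nonempty_of_ncard_ne_zero (s := {u : N.V | N.E u r}) (by omega)
      exact ⟨u, hu⟩
    rw [dif_pos h2]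
    exact h2.choose_spec

lemma used_prune (hT : T.IsBinTree) (e : Emb N T) {a b : N.V} (h : usedE e a b) :
    prune N (sigOf e) a b := by
  refine ⟨used_E h, fun _ => ?_⟩
  rw [sigOf, dif_pos ⟨a, h⟩]
  exact used_in_unique hT e (Exists.choose_spec (p := fun u => usedE e u b) ⟨a, h⟩) h

end NetAux
namespace NetAux
open Relation Set List

variable {X : Type} {N : Net X}

lemma complete (hv : N.ValidNet) (htc : N.TreeChild) (hb : N.Binary) (hns : N.HasNoShortcut)
    {T : Net X} (hT : T.IsBinTree) (e : Emb N T) :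
    ∃ (σ : N.V → N.V) (hval : ∀ r, N.IsReticulation r → N.E (σ r) r),
      T.Iso (treeOf N (prune N σ) (good_prune hv htc hb hns hval)) := by
  refine ⟨sigOf e, sigOf_valid hb e, ?_⟩
  set R := prune N (sigOf e) with hRdef
  set hg : Good N R := good_prune hv htc hb hns (sigOf_valid hb e) with hgdef
  -- the root maps to the root
  have hroot : e.φ T.root = N.root := by
    by_contra hne
    have hall : ∀ x : X, Relation.ReflTransGen R (e.φ T.root) (N.leaf x) := by
      intro x
      have h1 := usedRTG_trans e (T.connected (T.leaf x))
      rw [e.leafmap x] at h1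
      exact Relation.ReflTransGen.mono (fun _ _ h => used_prune hT e h) _ _ h1
    obtain ⟨d1, d2, hd12, hd1, hd2⟩ := hg.root2
    have hsib : ∀ a b : N.V, a ≠ b → R N.root a → R N.root b →
        Relation.ReflTransGen R a b → False := by
      intro a b hab ha hb' h
      have h2 : Relation.ReflTransGen R a N.root := stripR hg (fun _ _ h => h) h hab hb'
      rcases h2.cases_tail with h' | ⟨w, _, hw⟩
      · exact not_E_self (hg.sub (h' ▸ ha))
      · exact N.no_in_root w (hg.sub hw)
    have hconn := R_connected hg (e.φ T.root)
    rcases hconn.cases_head with h' | ⟨d, hd, hdT⟩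
    · exact hne h'.symm
    have hgen : ∀ da db : N.V, da ≠ db → R N.root da → R N.root db →
        Relation.ReflTransGen R da (e.φ T.root) → False := by
      intro da db hab hda hdb hpath
      obtain ⟨xb, hxb⟩ := reach_leaf hg db
      have h1 : Relation.ReflTransGen R da (N.leaf xb) := hpath.trans (hall xb)
      rcases linearR hg (fun _ _ h => h) h1 hxb with h | h
      · exact hsib da db hab hda hdb h
      · exact hsib db da (Ne.symm hab) hdb hda h
    rcases children_pair hv (hg.sub hd1) (hg.sub hd2) hd12 (hg.sub hd) with h' | h'
    · exact hgen d1 d2 hd12 hd1 hd2 (h' ▸ hdT)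
    · exact hgen d2 d1 (Ne.symm hd12) hd2 hd1 (h' ▸ hdT)
  -- vertices of N on used root-to-leaf paths are used
  have on_used : ∀ c : N.V, Relation.ReflTransGen (usedE e) N.root c →
      ∀ v : N.V, Relation.ReflTransGen R v c → v = N.root ∨ ∃ u, usedE e u v := by
    intro c
    induction c using WellFounded.induction (wfA N) with
    | _ c ih =>
      intro hused v hvc
      rcases Classical.em (v = c) with rfl | hne
      · rcases hused.cases_tail with h' | ⟨u, _, hu⟩
        · exact Or.inl h'
        · exact Or.inr ⟨u, hu⟩
      · rcases hvc.cases_tail with h' | ⟨w, hvw, hwc⟩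
        · exact absurd h' (fun h2 => hne h2.symm)
        have hcroot : c ≠ N.root := R_ne_root hg hwc
        rcases hused.cases_tail with h' | ⟨w', husedw', hw'c⟩
        · exact absurd h' hcroot
        obtain ⟨pc, _, huni⟩ := hg.parent c hcroot
        have hww : w' = w := by rw [huni w' (used_prune hT e hw'c), huni w hwc]
        exact ih w (Relation.TransGen.single (hg.sub hwc)) (hww ▸ husedw') v hvw
  -- every kept vertex is in the image of the embedding
  have kept_range : ∀ v : N.V, kept N R v → v ∈ Set.range e.φ := by
    intro v hk
    rcases hk with rfl | ⟨x, rfl⟩ | ⟨c1, c2, h12, hc1, hc2⟩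
    · exact ⟨T.root, hroot⟩
    · exact ⟨T.leaf x, e.leafmap x⟩
    by_contra hvr
    have husedc : ∀ c : N.V, R v c → ∃ u, usedE e u c := by
      intro c hc
      obtain ⟨xc, hxc⟩ := reach_leaf hg c
      have hupath : Relation.ReflTransGen (usedE e) N.root (N.leaf xc) := by
        have h1 := usedRTG_trans e (T.connected (T.leaf xc))
        rwa [e.leafmap, hroot] at h1
      rcases on_used (N.leaf xc) hupath c hxc with h | h
      · exact absurd h (R_ne_root hg hc)
      · exact h
    obtain ⟨u1, hu1⟩ := husedc c1 hc1
    obtain ⟨u2, hu2⟩ := husedc c2 hc2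
    have hv1 : u1 = v := by
      obtain ⟨pc, _, huni⟩ := hg.parent c1 (R_ne_root hg hc1)
      rw [huni u1 (used_prune hT e hu1), huni v hc1]
    have hv2 : u2 = v := by
      obtain ⟨pc, _, huni⟩ := hg.parent c2 (R_ne_root hg hc2)
      rw [huni u2 (used_prune hT e hu2), huni v hc2]
    rw [hv1] at hu1
    rw [hv2] at hu2
    exact h12 (used_out_unique e hvr hu1 hu2)
  -- images of tree vertices are kept
  have hkept : ∀ t : T.V, kept N R (e.φ t) := by
    intro t
    rcases Classical.em (t = T.root) with rfl | htroot
    · exact hroot ▸ kept_root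
    rcases Classical.em (T.IsLeaf t) with ⟨x, rfl⟩ | htnl
    · exact (e.leafmap x) ▸ kept_leaf x
    have hout := bin_outdeg_two hT htnl
    obtain ⟨s1, s2, hs12, hts1, hts2, _⟩ := children_two hT.1 hout
    obtain ⟨b1, hb1, hb1c⟩ := first_pair e hts1
    obtain ⟨b2, hb2, hb2c⟩ := first_pair e hts2
    have hbne : b1 ≠ b2 := by
      rcases hb1c with h1 | hm1 <;> rcases hb2c with h2 | hm2
      · intro h
        rw [h1, h2] at h
        exact hs12 (e.inj h)
      · intro h
        exact e.internal t s2 hts2 b2 hm2 ⟨s1, (h ▸ h1).symm⟩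
      · intro h
        exact e.internal t s1 hts1 b1 hm1 ⟨s2, (h.symm ▸ h2).symm⟩
      · intro h
        refine e.disjoint t s1 t s2 hts1 hts2 ?_ b1 hm1 (h ▸ hm2)
        intro hp
        exact hs12 (congrArg Prod.snd hp)
    exact Or.inr (Or.inr ⟨b1, b2, hbne, used_prune hT e hb1, used_prune hT e hb2⟩)
  -- edge correspondence
  have fwd : ∀ t s : T.V, T.E t s → tE N R (e.φ t) (e.φ s) := by
    intro t s hts
    apply tE_of_list (e.paths t s)
    · intro a b hab
      exact used_prune hT e ⟨t, s, hts, hab⟩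
    · intro w hw hkw
      obtain ⟨t', ht'⟩ := kept_range w hkw
      exact e.internal t s hts w hw ⟨t', ht'⟩
  have bwd : ∀ t s : T.V, tE N R (e.φ t) (e.φ s) → T.E t s := by
    intro t s h
    have hsroot : s ≠ T.root := by
      rintro rfl
      obtain ⟨w, _, hwv⟩ := h
      rw [hroot] at hwv
      exact N.no_in_root w (hg.sub hwv)
    obtain ⟨t0, ht0, _⟩ := bin_parent hT hsroot
    have h0 : tE N R (e.φ t0) (e.φ s) := fwd t0 s ht0
    have heq : e.φ t0 = e.φ t := tE_parent_unique hg (hkept t0) (hkept t) h0 h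
    rw [e.inj heq] at ht0
    exact ht0
  -- assemble the isomorphism
  have hbij : Function.Bijective (fun t : T.V => (⟨e.φ t, hkept t⟩ : (treeOf N R hg).V)) := by
    constructor
    · intro a b hab
      exact e.inj (congrArg Subtype.val hab)
    · rintro ⟨v, hkv⟩
      obtain ⟨t, ht⟩ := kept_range v hkv
      exact ⟨t, Subtype.ext ht⟩
  refine ⟨Equiv.ofBijective _ hbij, ?_, ?_⟩
  · intro u v
    exact ⟨fun h => fwd u v h, fun h => bwd u v h⟩
  · intro x
    exact Subtype.ext (e.leafmap x)

end NetAux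
namespace NetAux
open Relation Set List

variable {X : Type} {N : Net X}

lemma ppair_ex (hb : N.Binary) {r : N.V} (hr : N.IsReticulation r) :
    ∃ pq : N.V × N.V, pq.1 ≠ pq.2 ∧ {u : N.V | N.E u r} = {pq.1, pq.2} := by
  have h2 : N.indeg r = 2 := hb r hr
  rw [Net.indeg, Set.ncard_eq_two] at h2
  obtain ⟨a, b, hab, hset⟩ := h2
  exact ⟨(a, b), hab, hset⟩

noncomputable def ppair (hb : N.Binary) {r : N.V} (hr : N.IsReticulation r) : N.V × N.V :=
  (ppair_ex hb hr).choose

lemma ppair_ne (hb : N.Binary) {r : N.V} (hr : N.IsReticulation r) :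
    (ppair hb hr).1 ≠ (ppair hb hr).2 := (ppair_ex hb hr).choose_spec.1

lemma ppair_mem (hb : N.Binary) {r u : N.V} (hr : N.IsReticulation r) (hu : N.E u r) :
    u = (ppair hb hr).1 ∨ u = (ppair hb hr).2 := by
  have hset := (ppair_ex hb hr).choose_spec.2
  exact (Set.ext_iff.mp hset u).mp hu

lemma ppair_fst_E (hb : N.Binary) {r : N.V} (hr : N.IsReticulation r) :
    N.E (ppair hb hr).1 r := by
  have hset := (ppair_ex hb hr).choose_spec.2
  exact (Set.ext_iff.mp hset ((ppair_ex hb hr).choose.1)).mpr (Or.inl rfl)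

lemma ppair_snd_E (hb : N.Binary) {r : N.V} (hr : N.IsReticulation r) :
    N.E (ppair hb hr).2 r := by
  have hset := (ppair_ex hb hr).choose_spec.2
  exact (Set.ext_iff.mp hset ((ppair_ex hb hr).choose.2)).mpr (Or.inr rfl)

open Classical in
/-- the switching associated to a boolean choice on reticulations -/
noncomputable def sigOfBool (hb : N.Binary) (b : {v : N.V // N.IsReticulation v} → Bool) :
    N.V → N.V := fun v =>
  if h : N.IsReticulation v then
    (if b ⟨v, h⟩ then (ppair hb h).1 else (ppair hb h).2)
  else v

lemma sigOfBool_valid (hb : N.Binary) (b : {v : N.V // N.IsReticulation v} → Bool) :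
    ∀ r, N.IsReticulation r → N.E (sigOfBool hb b r) r := by
  intro r hr
  rw [sigOfBool, dif_pos hr]
  split
  · exact ppair_fst_E hb hr
  · exact ppair_snd_E hb hr

lemma treeOf_congr {R R' : N.V → N.V → Prop} (g : Good N R) (g' : Good N R') (h : R = R') :
    treeOf N R g = treeOf N R' g' := by
  subst h
  rfl

theorem stmt2_aux (hnorm : N.Normal) (hbin : N.Binary) (k : ℕ) (hk : N.numRetic = k) :
    ∃ f : Fin (2 ^ k) → Net X,
      (∀ i, (f i).IsBinTree ∧ N.Displays (f i)) ∧
      (∀ i j, i ≠ j → ¬ (f i).Iso (f j)) ∧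
      (∀ T : Net X, T.IsBinTree → N.Displays T → ∃ i, T.Iso (f i)) := by
  classical
  obtain ⟨hv, htc, hns⟩ := hnorm
  haveI : Finite N.V := finiteV N
  haveI : Fintype {v : N.V // N.IsReticulation v} := Fintype.ofFinite _
  have hcard : Fintype.card {v : N.V // N.IsReticulation v} = k := by
    rw [← Nat.card_eq_fintype_card]
    have h1 : Nat.card {v : N.V // N.IsReticulation v} =
        Nat.card {v : N.V | N.IsReticulation v} := rfl
    rw [h1, Nat.card_coe_set_eq]
    exact hk
  have hcardf : Fintype.card ({v : N.V // N.IsReticulation v} → Bool) = 2 ^ k := by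
    rw [Fintype.card_fun, Fintype.card_bool, hcard]
  set equivB : ({v : N.V // N.IsReticulation v} → Bool) ≃ Fin (2 ^ k) :=
    Fintype.equivFinOfCardEq hcardf with hequivB
  refine ⟨fun i => treeOf N (prune N (sigOfBool hbin (equivB.symm i)))
    (good_prune hv htc hbin hns (sigOfBool_valid hbin (equivB.symm i))), ?_, ?_, ?_⟩
  · intro i
    exact ⟨treeOf_isBinTree _, displays_treeOf _⟩
  · intro i j hij
    set b := equivB.symm i with hbdef
    set b' := equivB.symm j with hb'def
    have hbb : b ≠ b' := fun h => hij (by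
      rw [← equivB.apply_symm_apply i, ← equivB.apply_symm_apply j, ← hbdef, ← hb'def, h])
    have hex : ∃ rr : {v : N.V // N.IsReticulation v}, b rr ≠ b' rr := by
      by_contra h
      push_neg at h
      exact hbb (funext h)
    obtain ⟨rr, hrr⟩ := hex
    -- the set of disagreements
    set σ := sigOfBool hbin b with hσdef
    set σ' := sigOfBool hbin b' with hσ'def
    have hdiff_at : ∀ v (hret : N.IsReticulation v), b ⟨v, hret⟩ ≠ b' ⟨v, hret⟩ →
        σ v ≠ σ' v := by
      intro v hret hne
      rw [hσdef, hσ'def, sigOfBool, sigOfBool, dif_pos hret, dif_pos hret]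
      cases hB : b ⟨v, hret⟩ <;> cases hB' : b' ⟨v, hret⟩
      · rw [hB, hB'] at hne; exact absurd rfl hne
      · simp only [if_false, if_true]
        exact (ppair_ne hbin hret).symm
      · simp only [if_false, if_true]
        exact ppair_ne hbin hret
      · rw [hB, hB'] at hne; exact absurd rfl hne
    have hDne : {v : N.V | N.IsReticulation v ∧ σ v ≠ σ' v}.Nonempty :=
      ⟨rr.val, rr.prop, hdiff_at rr.val rr.prop (by
        have : (⟨rr.val, rr.prop⟩ : {v : N.V // N.IsReticulation v}) = rr := rfl
        rw [this]; exact hrr)⟩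
    obtain ⟨rstar, hrstarD, hminD⟩ := (wfB N).has_min _ hDne
    have hmin : ∀ r', N.IsReticulation r' → Relation.TransGen N.E rstar r' → σ r' = σ' r' := by
      intro r' h1 h2
      by_contra h3
      exact hminD r' ⟨h1, h3⟩ h2
    exact distinguish hv htc hbin hns (sigOfBool_valid hbin b) (sigOfBool_valid hbin b')
      hrstarD.1 hrstarD.2 hmin
  · intro T hT hD
    obtain ⟨e⟩ := hD
    obtain ⟨σ, hval, hiso⟩ := complete hv htc hbin hns hT e
    set bfun : {v : N.V // N.IsReticulation v} → Bool :=
      fun r => if σ r.val = (ppair hbin r.prop).1 then true else false with hbfun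
    refine ⟨equivB bfun, ?_⟩
    have hagree : ∀ v, N.IsReticulation v → sigOfBool hbin (equivB.symm (equivB bfun)) v = σ v := by
      rw [equivB.symm_apply_apply]
      intro v hret
      rw [sigOfBool, dif_pos hret]
      have hbv : bfun ⟨v, hret⟩ = (if σ v = (ppair hbin hret).1 then true else false) := rfl
      by_cases hc : σ v = (ppair hbin hret).1
      · rw [hbv, if_pos hc]
        simp only [if_true]
        exact hc.symm
      · rw [hbv, if_neg hc]
        simp only [Bool.false_eq_true, if_false]
        rcases ppair_mem hbin hret (hval v hret) with h | h
        · exact absurd h hc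
        · exact h.symm
    have heq := treeOf_congr
      (good_prune hv htc hbin hns (sigOfBool_valid hbin (equivB.symm (equivB bfun))))
      (good_prune hv htc hbin hns hval)
      (prune_congr hagree)
    show T.Iso (treeOf N (prune N (sigOfBool hbin (equivB.symm (equivB bfun))))
      (good_prune hv htc hbin hns (sigOfBool_valid hbin (equivB.symm (equivB bfun)))))
    rw [heq]
    exact hiso

end NetAux

/-- A binary normal network with `k` reticulations displays exactly
`2^k` binary phylogenetic `X`-trees (counted up to isomorphism). -/
theorem stmt2 {X : Type} (N : Net X) (hnorm : N.Normal) (hbin : N.Binary)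
    (k : ℕ) (hk : N.numRetic = k) :
    ∃ f : Fin (2 ^ k) → Net X,
      (∀ i, (f i).IsBinTree ∧ N.Displays (f i)) ∧
      (∀ i j, i ≠ j → ¬ (f i).Iso (f j)) ∧
      (∀ T : Net X, T.IsBinTree → N.Displays T → ∃ i, T.Iso (f i)) := by
  exact NetAux.stmt2_aux hnorm hbin k hk
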